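/- Let M : Matrix (Fin m) (Fin n) ℂ be a nonzero matrix. Then the ℓ²→ℓ² operator norm of M is at most the Frobenius norm of M (the square root of ∑_{i,j} |M i j|²), and equality holds if and only if M has rank 1. -/

import Mathlib

open Matrix
open scoped InnerProductSpace ComplexConjugate ComplexOrder

namespace L2OpAux

variable {m n : ℕ}

lemma norm_sq_eq (M : Matrix (Fin m) (Fin n) ℂ) (x : EuclideanSpace ℂ (Fin n)) :
    ‖Matrix.toEuclideanLin M x‖ ^ 2 =
      ∑ j, (Matrix.isHermitian_conjTranspose_mul_self M).eigenvalues j *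
        ‖(Matrix.isHermitian_conjTranspose_mul_self M).eigenvectorBasis.repr x j‖ ^ 2 := by
  set hA := Matrix.isHermitian_conjTranspose_mul_self M
  set b := hA.eigenvectorBasis with hb
  have hcomp : Matrix.toEuclideanLin (Mᴴ * M) x
      = Matrix.toEuclideanLin Mᴴ (Matrix.toEuclideanLin M x) := by
    simp only [Matrix.toEuclideanLin_eq_toLin,
      Matrix.toLin_mul _ (EuclideanSpace.basisFun (Fin m) ℂ).toBasis]
    rfl
  have hadj : ⟪Matrix.toEuclideanLin M x, Matrix.toEuclideanLin M x⟫_ℂ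
      = ⟪x, Matrix.toEuclideanLin (Mᴴ * M) x⟫_ℂ := by
    rw [hcomp, Matrix.toEuclideanLin_conjTranspose_eq_adjoint, LinearMap.adjoint_inner_right]
  have hbj : ∀ j, Matrix.toEuclideanLin (Mᴴ * M) (b j) = (hA.eigenvalues j : ℂ) • b j := by
    intro j
    have h1 := hA.mulVec_eigenvectorBasis j
    apply PiLp.ext
    intro i
    have : (Mᴴ * M) *ᵥ ⇑(b j) = hA.eigenvalues j • ⇑(b j) := h1
    simp [Matrix.toEuclideanLin_apply, this, Complex.real_smul]
  have hx : Matrix.toEuclideanLin (Mᴴ * M) x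
      = ∑ j, ((hA.eigenvalues j : ℂ) * b.repr x j) • b j := by
    conv_lhs => rw [← b.sum_repr x, map_sum]
    refine Finset.sum_congr rfl fun j _ => ?_
    rw [_root_.map_smul, hbj j, smul_smul, mul_comm]
  have hinner : ⟪x, Matrix.toEuclideanLin (Mᴴ * M) x⟫_ℂ
      = ∑ j, ((hA.eigenvalues j : ℂ) * (‖b.repr x j‖ ^ 2 : ℝ)) := by
    rw [hx, inner_sum]
    refine Finset.sum_congr rfl fun j _ => ?_
    have hcj : ⟪x, b j⟫_ℂ = conj (b.repr x j) := by
      rw [b.repr_apply_apply, inner_conj_symm]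
    rw [inner_smul_right, hcj, mul_assoc, RCLike.mul_conj]
    push_cast
    with_unfolding_all rfl
  have hns : ⟪Matrix.toEuclideanLin M x, Matrix.toEuclideanLin M x⟫_ℂ
      = ((‖Matrix.toEuclideanLin M x‖ ^ 2 : ℝ) : ℂ) := by
    rw [inner_self_eq_norm_sq_to_K]; norm_cast
  have := hns.symm.trans (hadj.trans hinner)
  exact_mod_cast this

lemma parseval (b : OrthonormalBasis (Fin n) ℂ (EuclideanSpace ℂ (Fin n)))
    (x : EuclideanSpace ℂ (Fin n)) :
    ∑ j, ‖b.repr x j‖ ^ 2 = ‖x‖ ^ 2 := by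
  rw [← b.repr.norm_map x, EuclideanSpace.norm_eq, Real.sq_sqrt]
  positivity

lemma sum_eigs (M : Matrix (Fin m) (Fin n) ℂ) :
    ∑ j, (Matrix.isHermitian_conjTranspose_mul_self M).eigenvalues j
      = ∑ i, ∑ j, ‖M i j‖ ^ 2 := by
  set hA := Matrix.isHermitian_conjTranspose_mul_self M
  have h1 : ((∑ j, hA.eigenvalues j : ℝ) : ℂ) = (Mᴴ * M).trace := by
    conv_rhs => rw [hA.spectral_theorem]
    rw [Unitary.conjStarAlgAut_apply, Matrix.trace_mul_comm, ← Matrix.mul_assoc, Unitary.coe_star_mul_self, Matrix.one_mul,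
      Matrix.trace_diagonal]
    push_cast
    rfl
  have h2 : (Mᴴ * M).trace = ((∑ i, ∑ j, ‖M i j‖ ^ 2 : ℝ) : ℂ) := by
    rw [Matrix.trace]
    simp_rw [Matrix.diag_apply, Matrix.mul_apply, Matrix.conjTranspose_apply, RCLike.star_def,
      RCLike.conj_mul]
    push_cast
    exact Finset.sum_comm
  exact_mod_cast h1.trans h2

end L2OpAux


/-- The ℓ²→ℓ² operator norm of a complex matrix: the operator norm of the induced
continuous linear map between the corresponding Euclidean spaces (i.e. the largest
singular value). -/
noncomputable def l2OpNorm {m n : ℕ} (M : Matrix (Fin m) (Fin n) ℂ) : ℝ :=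
  ‖LinearMap.toContinuousLinearMap (Matrix.toEuclideanLin M)‖

/-- For a nonzero complex matrix `M`, the ℓ²→ℓ² operator norm of `M` is
at most the Frobenius norm `√(∑ i j, ‖M i j‖²)`, with equality iff `M` has rank 1. -/
theorem l2OpNorm_le_frobenius_and_eq_iff_rank_one
    {m n : ℕ} (M : Matrix (Fin m) (Fin n) ℂ) (hM : M ≠ 0) :
    l2OpNorm M ≤ Real.sqrt (∑ i, ∑ j, ‖M i j‖ ^ 2) ∧
      (l2OpNorm M = Real.sqrt (∑ i, ∑ j, ‖M i j‖ ^ 2) ↔ M.rank = 1) := by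
  classical
  set S := ∑ i, ∑ j, ‖M i j‖ ^ 2 with hSdef
  set hA := Matrix.isHermitian_conjTranspose_mul_self M with hAdef
  set μ := hA.eigenvalues with hμdef
  set b := hA.eigenvectorBasis with hbdef
  set f := LinearMap.toContinuousLinearMap (Matrix.toEuclideanLin M) with hfdef
  have hμ0 : ∀ j, 0 ≤ μ j := fun j =>
    (Matrix.posSemidef_conjTranspose_mul_self M).eigenvalues_nonneg j
  have hsum : ∑ j, μ j = S := L2OpAux.sum_eigs M
  have hS0 : 0 < S := by
    obtain ⟨i, j, hij⟩ : ∃ i j, M i j ≠ 0 := by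
      by_contra h
      push_neg at h
      exact hM (by ext i j; simp [h])
    have h1 : (0:ℝ) < ∑ j', ‖M i j'‖ ^ 2 :=
      Finset.sum_pos' (fun _ _ => by positivity)
        ⟨j, Finset.mem_univ j, pow_pos (norm_pos_iff.mpr hij) 2⟩
    exact Finset.sum_pos' (fun i' _ => Finset.sum_nonneg fun _ _ => by positivity)
      ⟨i, Finset.mem_univ i, h1⟩
  have hn : Nonempty (Fin n) := by
    rcases Nat.eq_zero_or_pos n with h | h
    · subst h
      exact absurd (by ext i j; exact j.elim0 : M = 0) hM
    · exact ⟨⟨0, h⟩⟩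
  obtain ⟨j₀, hj₀⟩ := Finite.exists_max μ
  set L := μ j₀ with hLdef
  have hL0 : 0 ≤ L := hμ0 j₀
  have hfx : ∀ x : EuclideanSpace ℂ (Fin n),
      ‖f x‖ ^ 2 = ∑ j, μ j * ‖b.repr x j‖ ^ 2 := fun x => L2OpAux.norm_sq_eq M x
  have hub : l2OpNorm M ≤ Real.sqrt L := by
    apply ContinuousLinearMap.opNorm_le_bound _ (by positivity)
    intro x
    have h1 : ‖f x‖ ^ 2 ≤ L * ‖x‖ ^ 2 := by
      rw [hfx x, ← L2OpAux.parseval b x, Finset.mul_sum]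
      exact Finset.sum_le_sum fun j _ =>
        mul_le_mul_of_nonneg_right (hj₀ j) (by positivity)
    calc ‖f x‖ = Real.sqrt (‖f x‖ ^ 2) := (Real.sqrt_sq (norm_nonneg _)).symm
      _ ≤ Real.sqrt (L * ‖x‖ ^ 2) := Real.sqrt_le_sqrt h1
      _ = Real.sqrt L * ‖x‖ := by
          rw [Real.sqrt_mul hL0, Real.sqrt_sq (norm_nonneg _)]
  have hlb : Real.sqrt L ≤ l2OpNorm M := by
    have h1 : ‖f (b j₀)‖ ^ 2 = L := by
      rw [hfx, OrthonormalBasis.repr_self]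
      rw [Finset.sum_eq_single j₀]
      · simp [EuclideanSpace.single_apply, hLdef]
      · intro j _ hj
        simp [EuclideanSpace.single_apply, hj]
      · simp
    have hb1 : ‖b j₀‖ = 1 := b.orthonormal.1 j₀
    have h2 : ‖f (b j₀)‖ ≤ l2OpNorm M * ‖b j₀‖ := f.le_opNorm _
    calc Real.sqrt L = Real.sqrt (‖f (b j₀)‖ ^ 2) := by rw [h1]
      _ = ‖f (b j₀)‖ := Real.sqrt_sq (norm_nonneg _)
      _ ≤ l2OpNorm M := by rw [hb1, mul_one] at h2; exact h2
  have hop : l2OpNorm M = Real.sqrt L := le_antisymm hub hlb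
  have hLS : L ≤ S := hsum ▸ Finset.single_le_sum (fun j _ => hμ0 j) (Finset.mem_univ j₀)
  have hrank : M.rank = Fintype.card {j // μ j ≠ 0} := by
    rw [← Matrix.rank_conjTranspose_mul_self M, hA.rank_eq_card_non_zero_eigs]
  refine ⟨hop ▸ Real.sqrt_le_sqrt hLS, ?_⟩
  rw [hop, Real.sqrt_inj hL0 hS0.le, hrank]
  constructor
  · intro hLSeq
    rw [Fintype.card_eq_one_iff]
    refine ⟨⟨j₀, by rw [← hLdef, hLSeq]; exact hS0.ne'⟩, ?_⟩
    rintro ⟨j, hj⟩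
    apply Subtype.ext
    by_contra hne
    have he : μ j₀ + ∑ jj ∈ Finset.univ.erase j₀, μ jj = ∑ jj, μ jj :=
      Finset.add_sum_erase Finset.univ μ (Finset.mem_univ j₀)
    have hz : ∑ jj ∈ Finset.univ.erase j₀, μ jj = 0 := by
      rw [hsum] at he
      rw [← hLdef] at he
      linarith [hLSeq]
    exact hj ((Finset.sum_eq_zero_iff_of_nonneg fun jj _ => hμ0 jj).mp hz j
      (Finset.mem_erase.mpr ⟨hne, Finset.mem_univ j⟩))
  · intro hr
    obtain ⟨⟨j₁, hj₁⟩, huniq⟩ := Fintype.card_eq_one_iff.mp hr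
    have hzero : ∀ j, j ≠ j₁ → μ j = 0 := by
      intro j hj
      by_contra h0
      exact hj (congrArg Subtype.val (huniq ⟨j, h0⟩))
    have hSj : S = μ j₁ := by
      rw [← hsum]
      exact Finset.sum_eq_single j₁ (fun j _ hj => hzero j hj) (by simp)
    exact le_antisymm hLS (hSj ▸ hj₀ j₁)
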